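/- Let r ≥ 2 be an integer and let λ denote Lebesgue measure on [0,1]^r. If C ⊆ [0,1]^r is a Lebesgue measurable set that covers [0,1]^{r+1} (i.e., every sequence in [0,1]^{r+1} has a length-r subsequence belonging to C), then λ(C) ≥ 1/r. -/

import Mathlib

open MeasureTheory Filter Topology ENNReal

/-- `x` covers `a` if `x` is a subsequence of `a`. -/
def Covers {X : Type*} {r k : ℕ} (x : Fin r → X) (a : Fin k → X) : Prop :=
  ∃ g : Fin r → Fin k, StrictMono g ∧ ∀ i, a (g i) = x i

/-- `C ⊆ X^r` is a covering `(k-r)`-insertion code over `X`: every sequence in `X^k`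
is covered by some sequence in `C`. -/
def IsCoveringCode {X : Type*} (r k : ℕ) (C : Set (Fin r → X)) : Prop :=
  ∀ a : Fin k → X, ∃ x ∈ C, Covers x a

/-- Minimum size of a covering `(k-r)`-insertion code over the alphabet `[n]`. -/
noncomputable def covNum (n k r : ℕ) : ℕ :=
  sInf {m | ∃ C : Finset (Fin r → Fin n), IsCoveringCode r k (↑C : Set (Fin r → Fin n)) ∧ C.card = m}

/-- The unit cube `[0,1]^r`. -/
def unitCube (r : ℕ) : Set (Fin r → ℝ) := {x | ∀ i, x i ∈ Set.Icc (0 : ℝ) 1}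

/-- `C ⊆ [0,1]^r` covers `[0,1]^k`. -/
def CoversCube (r k : ℕ) (C : Set (Fin r → ℝ)) : Prop :=
  ∀ a ∈ unitCube k, ∃ x ∈ C, Covers x a

/-- Delete the `i`-th coordinate of a length `r+1` sequence. -/
def deleteAt {X : Type*} {r : ℕ} (i : Fin (r + 1)) (x : Fin (r + 1) → X) : Fin r → X :=
  x ∘ i.succAbove

/-- `extSet C i` is the set `C_i` of sequences in `X^{r+1}` whose subsequence obtained by
deleting the `i`-th coordinate belongs to `C`. -/
def extSet {X : Type*} {r : ℕ} (C : Set (Fin r → X)) (i : Fin (r + 1)) :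
    Set (Fin (r + 1) → X) :=
  {x | deleteAt i x ∈ C}

/-- A set of sequences is symmetric if it is closed under permuting the coordinates. -/
def IsSymmetric {X : Type*} {k : ℕ} (M : Set (Fin k → X)) : Prop :=
  ∀ x ∈ M, ∀ σ : Equiv.Perm (Fin k), x ∘ σ ∈ M

/-- The symmetric closure of a set of sequences. -/
def SymClosure {X : Type*} {k : ℕ} (M : Set (Fin k → X)) : Set (Fin k → X) :=
  {x | ∃ σ : Equiv.Perm (Fin k), x ∘ σ ∈ M}

/-- A Turán `(n,k,r)`-system: a family of `r`-element subsets of `[n]` such that every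
`k`-element subset of `[n]` contains a member of the family. -/
def IsTuranSystem (n k r : ℕ) (F : Finset (Finset (Fin n))) : Prop :=
  (∀ A ∈ F, A.card = r) ∧ ∀ K : Finset (Fin n), K.card = k → ∃ A ∈ F, A ⊆ K

/-- Minimum size of a Turán `(n,k,r)`-system. -/
noncomputable def turanNum (n k r : ℕ) : ℕ :=
  sInf {m | ∃ F : Finset (Finset (Fin n)), IsTuranSystem n k r F ∧ F.card = m}

namespace CoverAux

lemma val_succAbove {n : ℕ} (q : Fin (n + 1)) (j : Fin n) :
    ((q.succAbove j : Fin (n + 1)) : ℕ) = if (j : ℕ) < (q : ℕ) then (j : ℕ) else (j : ℕ) + 1 := by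
  rw [Fin.succAbove]
  split_ifs with h1 h2 h3
  · simp
  · exact absurd (by simpa [Fin.lt_def] using h1) h2
  · exact absurd (by simpa [Fin.lt_def] using h3) h1
  · simp

lemma val_predAbove {n : ℕ} (j : Fin n) (q : Fin (n + 1)) :
    ((j.predAbove q : Fin n) : ℕ) = if (j : ℕ) < (q : ℕ) then (q : ℕ) - 1 else (q : ℕ) := by
  rw [Fin.predAbove]
  split_ifs with h1 h2 h3
  · simp
  · exact absurd (by simpa [Fin.lt_def] using h1) h2
  · exact absurd (by simpa [Fin.lt_def] using h3) h1
  · simp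

lemma succAbove_succAbove_predAbove {n : ℕ} (q : Fin (n + 2)) (j : Fin (n + 1)) :
    (q.succAbove j).succAbove (j.predAbove q) = q := by
  have hj := j.isLt
  have hq := q.isLt
  apply Fin.ext
  simp only [val_succAbove, val_predAbove]
  split_ifs <;> omega

lemma succAbove_succAbove_comm {n : ℕ} (q : Fin (n + 2)) (j : Fin (n + 1)) (k : Fin n) :
    (q.succAbove j).succAbove ((j.predAbove q).succAbove k) = q.succAbove (j.succAbove k) := by
  have hj := j.isLt
  have hq := q.isLt
  have hk := k.isLt
  apply Fin.ext
  simp only [val_succAbove, val_predAbove]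
  split_ifs <;> omega

lemma removeNth_apply {α : Type*} {n : ℕ} (i : Fin (n + 1)) (f : Fin (n + 1) → α) (k : Fin n) :
    Fin.removeNth i f k = f (i.succAbove k) := rfl

lemma removeNth_insertNth_succAbove {α : Type*} {n : ℕ} (q : Fin (n + 2)) (j : Fin (n + 1))
    (v : α) (x : Fin (n + 1) → α) :
    Fin.removeNth (q.succAbove j) (Fin.insertNth q v x : Fin (n+2) → α)
      = Fin.insertNth (j.predAbove q) v (Fin.removeNth j x) := by
  funext u
  by_cases hu : u = j.predAbove q
  · subst hu
    rw [removeNth_apply, succAbove_succAbove_predAbove, Fin.insertNth_apply_same,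
      Fin.insertNth_apply_same]
  · obtain ⟨k, hk⟩ := Fin.exists_succAbove_eq (Ne.symm (Ne.symm hu))
    subst hk
    rw [removeNth_apply, succAbove_succAbove_comm, Fin.insertNth_apply_succAbove,
      Fin.insertNth_apply_succAbove, removeNth_apply]

lemma exists_eq_succAbove_of_strictMono {n : ℕ} {g : Fin (n + 1) → Fin (n + 2)}
    (hg : StrictMono g) : ∃ t : Fin (n + 2), ∀ u, g u = t.succAbove u := by
  classical
  have hinj : Function.Injective g := hg.injective
  have hcard : (Finset.image g Finset.univ).card = n + 1 := by
    rw [Finset.card_image_of_injective _ hinj, Finset.card_univ, Fintype.card_fin]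
  have hne : Finset.image g Finset.univ ≠ Finset.univ := by
    intro h
    have := congrArg Finset.card h
    simp [hcard, Finset.card_univ] at this
  obtain ⟨t, ht⟩ : ∃ t, t ∉ Finset.image g Finset.univ := by
    by_contra h
    push_neg at h
    exact hne (Finset.eq_univ_of_forall h)
  have himg : Finset.image g Finset.univ = Finset.univ.erase t := by
    apply Finset.eq_of_subset_of_card_le
    · intro z hz
      refine Finset.mem_erase.mpr ⟨?_, Finset.mem_univ _⟩
      rintro rfl; exact ht hz
    · rw [Finset.card_erase_of_mem (Finset.mem_univ _), Finset.card_univ, Fintype.card_fin, hcard]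
      omega
  have hrange : Set.range g = Set.range t.succAbove := by
    rw [Fin.range_succAbove]
    ext z
    constructor
    · rintro ⟨u, rfl⟩
      have : g u ∈ Finset.univ.erase t := himg ▸ Finset.mem_image_of_mem g (Finset.mem_univ u)
      exact (Finset.mem_erase.mp this).1
    · intro hz
      have : z ∈ Finset.image g Finset.univ := by
        rw [himg]; exact Finset.mem_erase.mpr ⟨hz, Finset.mem_univ _⟩
      obtain ⟨u, _, rfl⟩ := Finset.mem_image.mp this
      exact ⟨u, rfl⟩
  haveI : WellFoundedLT (Fin (n + 1)) := inferInstance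
  exact ⟨t, fun u =>
    congrFun ((StrictMono.range_inj hg (Fin.strictMono_succAbove t)).mp hrange) u⟩

lemma sum_predAbove {M : Type*} [AddCommMonoid M] {n : ℕ} (j : Fin (n + 1)) (f : Fin (n + 1) → M) :
    ∑ q : Fin (n + 2), f (j.predAbove q) = (∑ p : Fin (n + 1), f p) + f j := by
  classical
  have himg : Finset.image (Fin.succAbove (j.castSucc)) Finset.univ
      = Finset.univ.erase (j.castSucc) := by
    ext q
    simp [Fin.exists_succAbove_eq_iff, eq_comm]
  have h1 : ∑ q ∈ Finset.univ.erase (j.castSucc), f (j.predAbove q)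
      = ∑ p : Fin (n + 1), f p := by
    rw [← himg, Finset.sum_image (fun a _ b _ h => Fin.succAbove_right_injective h)]
    simp [Fin.predAbove_succAbove]
  have h2 : ∑ q : Fin (n + 2), f (j.predAbove q)
      = ∑ q ∈ Finset.univ.erase (j.castSucc), f (j.predAbove q) + f (j.predAbove j.castSucc) :=
    (Finset.sum_erase_add _ _ (Finset.mem_univ _)).symm
  rw [h2, h1, Fin.predAbove_castSucc_self]

lemma two_mul_mul_le_sq_add_sq (a b : ℝ≥0∞) : 2 * (a * b) ≤ a ^ 2 + b ^ 2 := by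
  rcases le_total a b with h | h
  · obtain ⟨c, rfl⟩ : ∃ c, b = a + c := ⟨b - a, by rw [add_comm, tsub_add_cancel_of_le h]⟩
    have : a ^ 2 + (a + c) ^ 2 = 2 * (a * (a + c)) + c ^ 2 := by ring
    rw [this]
    exact le_self_add
  · obtain ⟨c, rfl⟩ : ∃ c, a = b + c := ⟨a - b, by rw [add_comm, tsub_add_cancel_of_le h]⟩
    have : (b + c) ^ 2 + b ^ 2 = 2 * ((b + c) * b) + c ^ 2 := by ring
    rw [this]
    exact le_self_add

lemma sq_sum_le_card_mul_sum_sq {n : ℕ} (f : Fin n → ℝ≥0∞) :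
    (∑ j, f j) ^ 2 ≤ (n : ℝ≥0∞) * ∑ j, f j ^ 2 := by
  have key : 2 * (∑ j, f j) ^ 2 ≤ 2 * ((n : ℝ≥0∞) * ∑ j, f j ^ 2) := by
    have expand : (∑ j, f j) ^ 2 = ∑ j, ∑ k, f j * f k := by
      rw [sq, Finset.sum_mul_sum]
    calc 2 * (∑ j, f j) ^ 2 = ∑ j, ∑ k, 2 * (f j * f k) := by
          rw [expand, Finset.mul_sum]
          congr 1; funext j
          rw [Finset.mul_sum]
      _ ≤ ∑ j, ∑ k, (f j ^ 2 + f k ^ 2) :=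
          Finset.sum_le_sum fun j _ => Finset.sum_le_sum fun k _ => two_mul_mul_le_sq_add_sq _ _
      _ = 2 * ((n : ℝ≥0∞) * ∑ j, f j ^ 2) := by
          simp only [Finset.sum_add_distrib, Finset.sum_const, Finset.card_univ,
            Fintype.card_fin, nsmul_eq_mul, ← Finset.mul_sum]
          ring
  calc (∑ j, f j) ^ 2 = 2⁻¹ * (2 * (∑ j, f j) ^ 2) := by
        rw [← mul_assoc, ENNReal.inv_mul_cancel (by norm_num) (by norm_num), one_mul]
    _ ≤ 2⁻¹ * (2 * ((n : ℝ≥0∞) * ∑ j, f j ^ 2)) := by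
        exact mul_le_mul_right key _
    _ = (n : ℝ≥0∞) * ∑ j, f j ^ 2 := by
        rw [← mul_assoc, ENNReal.inv_mul_cancel (by norm_num) (by norm_num), one_mul]

lemma lintegral_sq_cauchy {Y : Type*} [MeasurableSpace Y] (ρ : Measure Y)
    (hρ : ρ Set.univ = 1) {S : Y → ℝ≥0∞} (hS : Measurable S) :
    (∫⁻ y, S y ∂ρ) ^ 2 ≤ ∫⁻ y, S y ^ 2 ∂ρ := by
  set J := ∫⁻ y, S y ∂ρ with hJ
  set I := ∫⁻ y, S y ^ 2 ∂ρ with hI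
  have key : 2 * J ^ 2 ≤ 2 * I := by
    have h1 : J ^ 2 = ∫⁻ y, S y * J ∂ρ := by
      rw [sq, lintegral_mul_const _ hS]
    have h2 : ∀ y, S y * J = ∫⁻ y', S y * S y' ∂ρ := fun y =>
      (lintegral_const_mul (S y) hS).symm
    have h3 : 2 * J ^ 2 = ∫⁻ y, ∫⁻ y', 2 * (S y * S y') ∂ρ ∂ρ := by
      rw [h1, ← lintegral_const_mul 2 (hS.mul_const J)]
      congr 1; funext y
      rw [h2 y, ← lintegral_const_mul 2 (hS.const_mul _)]
    have h4 : ∫⁻ y, ∫⁻ y', 2 * (S y * S y') ∂ρ ∂ρ ≤ ∫⁻ y, ∫⁻ y', (S y ^ 2 + S y' ^ 2) ∂ρ ∂ρ :=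
      lintegral_mono fun y => lintegral_mono fun y' => two_mul_mul_le_sq_add_sq _ _
    have h5 : ∫⁻ y, ∫⁻ y', (S y ^ 2 + S y' ^ 2) ∂ρ ∂ρ = 2 * I := by
      have inner : ∀ y, ∫⁻ y', (S y ^ 2 + S y' ^ 2) ∂ρ = S y ^ 2 + I := by
        intro y
        rw [lintegral_add_left measurable_const, lintegral_const, hρ, mul_one]
      simp only [inner]
      rw [lintegral_add_right _ measurable_const, lintegral_const, hρ, mul_one, two_mul]
    calc 2 * J ^ 2 = _ := h3
      _ ≤ _ := h4
      _ = 2 * I := h5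
  calc J ^ 2 = 2⁻¹ * (2 * J ^ 2) := by
        rw [← mul_assoc, ENNReal.inv_mul_cancel (by norm_num) (by norm_num), one_mul]
    _ ≤ 2⁻¹ * (2 * I) := mul_le_mul_right key _
    _ = I := by rw [← mul_assoc, ENNReal.inv_mul_cancel (by norm_num) (by norm_num), one_mul]

lemma unitCube_eq (n : ℕ) :
    unitCube n = Set.pi Set.univ (fun _ : Fin n => Set.Icc (0:ℝ) 1) := by
  ext x; simp [unitCube, Set.mem_pi, Pi.le_def, Set.mem_Icc, forall_and]

lemma measurableSet_unitCube (n : ℕ) : MeasurableSet (unitCube n) := by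
  rw [unitCube_eq]
  exact MeasurableSet.univ_pi fun _ => measurableSet_Icc

lemma volume_unitCube (n : ℕ) : volume (unitCube n) = 1 := by
  rw [unitCube_eq, volume_pi_pi]
  simp [Real.volume_Icc]

end CoverAux

open CoverAux

/-- If `C ⊆ [0,1]^r` (with `r ≥ 2`) is Lebesgue measurable and covers
`[0,1]^{r+1}`, then `λ(C) ≥ 1/r`. -/
theorem measure_coveringCode_ge {r : ℕ} (hr : 2 ≤ r) (C : Set (Fin r → ℝ))
    (hsub : C ⊆ unitCube r) (hmeas : MeasurableSet C)
    (hcov : CoversCube r (r + 1) C) :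
    1 / (r : ℝ≥0∞) ≤ volume C := by
  obtain ⟨s, rfl⟩ : ∃ s, r = s + 1 := ⟨r - 1, by omega⟩
  -- the complement of `C` in the unit cube
  set D : Set (Fin (s+1) → ℝ) := unitCube (s+1) \ C with hDdef
  have hDmeas : MeasurableSet D := (measurableSet_unitCube (s+1)).diff hmeas
  have hDsub : D ⊆ unitCube (s+1) := Set.diff_subset
  set m := volume D with hmdef
  have hm1 : m ≤ 1 := le_trans (measure_mono hDsub) (le_of_eq (volume_unitCube (s+1)))
  have hmtop : m ≠ ∞ := (lt_of_le_of_lt hm1 ENNReal.one_lt_top).ne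
  have hCm : volume C + m = 1 := by
    have h := measure_inter_add_diff (μ := volume) (unitCube (s+1)) hmeas
    rwa [Set.inter_eq_self_of_subset_right hsub, volume_unitCube] at h
  -- the insertion equivalences
  set E : (i : Fin (s+1)) → ((Fin (s+1) → ℝ) ≃ᵐ ℝ × (Fin s → ℝ)) :=
    fun i => MeasurableEquiv.piFinSuccAbove (fun _ => ℝ) i with hEdef
  have hE : ∀ i, MeasurePreserving (E i) volume volume :=
    fun i => volume_preserving_piFinSuccAbove (fun _ => ℝ) i
  have hEs : ∀ i, MeasurePreserving (E i).symm volume volume := fun i => (hE i).symm _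
  have hEsapp : ∀ (i : Fin (s+1)) (v : ℝ) (y : Fin s → ℝ),
      (E i).symm (v, y) = Fin.insertNth i v y := by
    intro i v y
    simp [hEdef, MeasurableEquiv.piFinSuccAbove_symm_apply, Fin.insertNthEquiv]
  set G : Fin (s+1) → Set (ℝ × (Fin s → ℝ)) := fun i => (E i).symm ⁻¹' D with hGdef
  have hGmeas : ∀ i, MeasurableSet (G i) := fun i => (E i).symm.measurable hDmeas
  -- the section measures
  set d : Fin (s+1) → (Fin s → ℝ) → ℝ≥0∞ :=
    fun i y => volume ((fun v : ℝ => (v, y)) ⁻¹' G i) with hddef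
  have hdmeas : ∀ i, Measurable (d i) := fun i => measurable_measure_prodMk_right (hGmeas i)
  have hd_eq : ∀ i y, d i y = volume {v : ℝ | Fin.insertNth i v y ∈ D} := by
    intro i y
    have hset : ((fun v : ℝ => (v, y)) ⁻¹' G i) = {v : ℝ | Fin.insertNth i v y ∈ D} := by
      ext v; simp [hGdef, hEsapp]
    calc d i y = volume ((fun v : ℝ => (v, y)) ⁻¹' G i) := rfl
      _ = volume {v : ℝ | Fin.insertNth i v y ∈ D} := by rw [hset]
  have hIcc1 : volume (Set.Icc (0:ℝ) 1) = 1 := by simp [Real.volume_Icc]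
  have hd1 : ∀ i y, d i y ≤ 1 := by
    intro i y
    rw [hd_eq]
    refine le_trans (measure_mono ?_) (le_of_eq hIcc1)
    intro v hv
    have h := hDsub hv i
    rwa [Fin.insertNth_apply_same] at h
  have hdzero : ∀ i y, y ∉ unitCube s → d i y = 0 := by
    intro i y hy
    rw [hd_eq]
    have : {v : ℝ | Fin.insertNth i v y ∈ D} = ∅ := by
      ext v
      simp only [Set.mem_setOf_eq, Set.mem_empty_iff_false, iff_false]
      intro hv
      refine hy fun k => ?_
      have h := hDsub hv (i.succAbove k)
      rwa [Fin.insertNth_apply_succAbove] at h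
    rw [this, measure_empty]
  -- Step A : each section integrates to m
  have hInt : ∀ i, ∫⁻ y, d i y = m := by
    intro i
    have h1 : volume (G i) = m := (hEs i).measure_preimage hDmeas.nullMeasurableSet
    rw [← h1, Measure.volume_eq_prod, Measure.prod_apply_symm (hGmeas i)]
  -- Step D : Fubini for products of sections
  have hFub : ∀ (i p : Fin (s+1)),
      ∫⁻ x in D, d p (Fin.removeNth i x) = ∫⁻ y, d p y * d i y := by
    intro i p
    have hrem : Measurable (fun x : Fin (s+1) → ℝ => Fin.removeNth i x) :=
      measurable_pi_iff.mpr fun k => measurable_pi_apply _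
    set F : (Fin (s+1) → ℝ) → ℝ≥0∞ := D.indicator (fun x => d p (Fin.removeNth i x)) with hF
    have hFmeas : Measurable F := ((hdmeas p).comp hrem).indicator hDmeas
    have h0 : ∫⁻ x in D, d p (Fin.removeNth i x) = ∫⁻ x, F x :=
      (lintegral_indicator hDmeas _).symm
    have h1 : ∫⁻ x, F x = ∫⁻ z : ℝ × (Fin s → ℝ), F ((E i).symm z) :=
      ((hEs i).lintegral_comp hFmeas).symm
    have hptw : ∀ z : ℝ × (Fin s → ℝ),
        F ((E i).symm z) = (G i).indicator (fun z => d p z.2) z := by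
      rintro ⟨v, y⟩
      have hmem : ((v, y) ∈ G i) ↔ Fin.insertNth i v y ∈ D := by
        simp [hGdef, hEsapp]
      rw [hEsapp, hF]
      by_cases hz : Fin.insertNth i v y ∈ D
      · rw [Set.indicator_of_mem hz, Set.indicator_of_mem (hmem.mpr hz), Fin.removeNth_insertNth]
      · rw [Set.indicator_of_notMem hz, Set.indicator_of_notMem (fun h => hz (hmem.mp h))]
    have hmeas2 : Measurable fun z : ℝ × (Fin s → ℝ) => (G i).indicator (fun z => d p z.2) z :=
      ((hdmeas p).comp measurable_snd).indicator (hGmeas i)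
    have h2 : ∫⁻ z : ℝ × (Fin s → ℝ), F ((E i).symm z)
        = ∫⁻ y, ∫⁻ v, (G i).indicator (fun z => d p z.2) (v, y) := by
      simp only [hptw]
      rw [Measure.volume_eq_prod, lintegral_prod_symm _ hmeas2.aemeasurable]
    have h3 : ∀ y, ∫⁻ v, (G i).indicator (fun z => d p z.2) (v, y) = d p y * d i y := by
      intro y
      have heq : (fun v : ℝ => (G i).indicator (fun z => d p z.2) (v, y))
          = fun v => ((fun v : ℝ => (v, y)) ⁻¹' G i).indicator (fun _ => d p y) v := by
        funext v
        by_cases h : (v, y) ∈ G i <;> simp [Set.indicator, h]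
      rw [heq, lintegral_indicator (measurable_prodMk_right (hGmeas i)), setLIntegral_const]
    rw [h0, h1, h2]
    simp only [h3]
  -- Step B : pointwise covering bound
  have hptB : ∀ (q : Fin (s+2)) (x : Fin (s+1) → ℝ), x ∈ D →
      ∑ j : Fin (s+1), d (j.predAbove q) (Fin.removeNth j x) ≤ (s : ℝ≥0∞) := by
    intro q x hx
    have hxQ : x ∈ unitCube (s+1) := hDsub hx
    have hxC : x ∉ C := by
      rw [hDdef] at hx
      exact hx.2
    set V : Fin (s+1) → Set ℝ :=
      fun j => {v : ℝ | Fin.insertNth (j.predAbove q) v (Fin.removeNth j x) ∈ D} with hVdef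
    have hdV : ∀ j, d (j.predAbove q) (Fin.removeNth j x) = volume (V j) := fun j => hd_eq _ _
    have hVeq : ∀ j, V j = (fun v : ℝ => (v, Fin.removeNth j x)) ⁻¹' G (j.predAbove q) := by
      intro j; ext v; simp [hVdef, hGdef, hEsapp]
    have hVmeas : ∀ j, MeasurableSet (V j) := by
      intro j; rw [hVeq]; exact measurable_prodMk_right (hGmeas _)
    have hVsub : ∀ j, V j ⊆ Set.Icc (0:ℝ) 1 := by
      intro j v hv
      have h := hDsub hv (j.predAbove q)
      rwa [Fin.insertNth_apply_same] at h
    have hVinter : ∀ v ∈ Set.Icc (0:ℝ) 1, ∃ j, v ∉ V j := by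
      intro v hv
      have ha : Fin.insertNth q v x ∈ unitCube (s+2) := by
        intro u
        rcases eq_or_ne u q with rfl | hu
        · rwa [Fin.insertNth_apply_same]
        · obtain ⟨k, rfl⟩ := Fin.exists_succAbove_eq hu
          rw [Fin.insertNth_apply_succAbove]
          exact hxQ k
      obtain ⟨z, hzC, g, hg, hgz⟩ := hcov _ ha
      obtain ⟨t, hts⟩ := exists_eq_succAbove_of_strictMono hg
      have hzt : Fin.removeNth t (Fin.insertNth q v x : Fin (s+2) → ℝ) = z := by
        funext u
        rw [removeNth_apply, ← hts u]
        exact hgz u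
      have htq : t ≠ q := by
        rintro rfl
        rw [Fin.removeNth_insertNth] at hzt
        exact hxC (hzt ▸ hzC)
      obtain ⟨j, hj⟩ := Fin.exists_succAbove_eq htq
      refine ⟨j, fun hvj => ?_⟩
      have hzD : z ∈ D := by
        rw [← hzt, ← hj, removeNth_insertNth_succAbove]
        exact hvj
      rw [hDdef] at hzD
      exact hzD.2 hzC
    have hIcc : volume (Set.Icc (0:ℝ) 1) = 1 := by simp [Real.volume_Icc]
    have hsplit : ∀ j, volume (V j) + volume (Set.Icc (0:ℝ) 1 \ V j) = 1 := by
      intro j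
      have h := measure_inter_add_diff (μ := volume) (Set.Icc (0:ℝ) 1) (hVmeas j)
      rwa [Set.inter_eq_self_of_subset_right (hVsub j), hIcc] at h
    have hcover : Set.Icc (0:ℝ) 1 ⊆ ⋃ j, (Set.Icc (0:ℝ) 1 \ V j) := by
      intro v hv
      obtain ⟨j, hj⟩ := hVinter v hv
      exact Set.mem_iUnion.mpr ⟨j, hv, hj⟩
    have hone : (1:ℝ≥0∞) ≤ ∑ j : Fin (s+1), volume (Set.Icc (0:ℝ) 1 \ V j) := by
      calc (1:ℝ≥0∞) = volume (Set.Icc (0:ℝ) 1) := hIcc.symm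
        _ ≤ volume (⋃ j, (Set.Icc (0:ℝ) 1 \ V j)) := measure_mono hcover
        _ ≤ ∑' j : Fin (s+1), volume (Set.Icc (0:ℝ) 1 \ V j) := measure_iUnion_le _
        _ = ∑ j : Fin (s+1), volume (Set.Icc (0:ℝ) 1 \ V j) := tsum_fintype _
    have hsum : (∑ j : Fin (s+1), volume (V j)) + 1 ≤ (s:ℝ≥0∞) + 1 := by
      calc (∑ j : Fin (s+1), volume (V j)) + 1
          ≤ (∑ j : Fin (s+1), volume (V j)) + ∑ j : Fin (s+1), volume (Set.Icc (0:ℝ) 1 \ V j) :=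
            add_le_add_right hone _
        _ = ∑ j : Fin (s+1), (volume (V j) + volume (Set.Icc (0:ℝ) 1 \ V j)) :=
            Finset.sum_add_distrib.symm
        _ = ∑ _j : Fin (s+1), (1:ℝ≥0∞) := by simp only [hsplit]
        _ = (s:ℝ≥0∞) + 1 := by
            simp [Finset.sum_const, Finset.card_univ]
    have hfin := (ENNReal.add_le_add_iff_right ENNReal.one_ne_top).mp hsum
    calc ∑ j : Fin (s+1), d (j.predAbove q) (Fin.removeNth j x)
        = ∑ j : Fin (s+1), volume (V j) := by simp only [hdV]
      _ ≤ (s:ℝ≥0∞) := hfin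
  -- Step C : integrated covering bound
  have hIntB : ∀ q : Fin (s+2),
      ∑ j : Fin (s+1), ∫⁻ y, d (j.predAbove q) y * d j y ≤ (s:ℝ≥0∞) * m := by
    intro q
    have hrem : ∀ j : Fin (s+1), Measurable (fun x : Fin (s+1) → ℝ => Fin.removeNth j x) :=
      fun j => measurable_pi_iff.mpr fun k => measurable_pi_apply _
    have h1 : ∑ j : Fin (s+1), ∫⁻ y, d (j.predAbove q) y * d j y
        = ∑ j : Fin (s+1), ∫⁻ x in D, d (j.predAbove q) (Fin.removeNth j x) :=
      Finset.sum_congr rfl fun j _ => (hFub j (j.predAbove q)).symm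
    have h2 : ∑ j : Fin (s+1), ∫⁻ x in D, d (j.predAbove q) (Fin.removeNth j x)
        = ∫⁻ x in D, ∑ j : Fin (s+1), d (j.predAbove q) (Fin.removeNth j x) :=
      (lintegral_finset_sum _ (fun j _ => ((hdmeas (j.predAbove q)).comp (hrem j)))).symm
    rw [h1, h2]
    calc ∫⁻ x in D, ∑ j : Fin (s+1), d (j.predAbove q) (Fin.removeNth j x)
        ≤ ∫⁻ _x in D, (s:ℝ≥0∞) := setLIntegral_mono measurable_const (fun x hx => hptB q x hx)
      _ = (s:ℝ≥0∞) * m := by rw [setLIntegral_const]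
  -- the total section function and its square sum
  set S : (Fin s → ℝ) → ℝ≥0∞ := fun y => ∑ j : Fin (s+1), d j y with hSdef
  set T : (Fin s → ℝ) → ℝ≥0∞ := fun y => ∑ j : Fin (s+1), (d j y) ^ 2 with hTdef
  have hSmeas : Measurable S := Finset.measurable_sum _ fun j _ => hdmeas j
  have hTmeas : Measurable T := Finset.measurable_sum _ fun j _ => (hdmeas j).pow_const 2
  -- Step E : summing over q
  have hkey : (∫⁻ y, (S y) ^ 2) + ∫⁻ y, T y ≤ ((s:ℝ≥0∞) + 2) * ((s:ℝ≥0∞) * m) := by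
    have hswap : ∑ q : Fin (s+2), ∑ j : Fin (s+1), ∫⁻ y, d (j.predAbove q) y * d j y
        = ∑ j : Fin (s+1), ∑ q : Fin (s+2), ∫⁻ y, d (j.predAbove q) y * d j y :=
      Finset.sum_comm
    have hj1 : ∀ j : Fin (s+1), ∑ q : Fin (s+2), ∫⁻ y, d (j.predAbove q) y * d j y
        = ∫⁻ y, (S y + d j y) * d j y := by
      intro j
      rw [← lintegral_finset_sum (f := fun q y => d (j.predAbove q) y * d j y) _ (fun q _ => (hdmeas (j.predAbove q)).mul (hdmeas j))]
      congr 1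
      funext y
      rw [← Finset.sum_mul]
      congr 1
      exact sum_predAbove j (fun p => d p y)
    have hj2 : ∑ j : Fin (s+1), ∫⁻ y, (S y + d j y) * d j y
        = (∫⁻ y, (S y) ^ 2) + ∫⁻ y, T y := by
      rw [← lintegral_finset_sum (f := fun j y => (S y + d j y) * d j y) _ (fun j _ => ((hSmeas.add (hdmeas j)).mul (hdmeas j))),
        ← lintegral_add_left (hSmeas.pow_const 2) ]
      congr 1
      funext y
      calc ∑ j : Fin (s+1), (S y + d j y) * d j y
          = ∑ j : Fin (s+1), (S y * d j y + d j y * d j y) := by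
            congr 1; funext j; ring
        _ = S y * ∑ j : Fin (s+1), d j y + ∑ j : Fin (s+1), d j y * d j y := by
            rw [Finset.sum_add_distrib, Finset.mul_sum]
        _ = S y ^ 2 + T y := by
            rw [hSdef, hTdef]
            congr 1
            · rw [sq]
            · congr 1; funext j; rw [sq]
    have hbound : ∑ q : Fin (s+2), ∑ j : Fin (s+1), ∫⁻ y, d (j.predAbove q) y * d j y
        ≤ ((s:ℝ≥0∞) + 2) * ((s:ℝ≥0∞) * m) := by
      calc ∑ q : Fin (s+2), ∑ j : Fin (s+1), ∫⁻ y, d (j.predAbove q) y * d j y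
          ≤ ∑ _q : Fin (s+2), (s:ℝ≥0∞) * m := Finset.sum_le_sum fun q _ => hIntB q
        _ = ((s:ℝ≥0∞) + 2) * ((s:ℝ≥0∞) * m) := by
            rw [Finset.sum_const, Finset.card_univ, Fintype.card_fin, nsmul_eq_mul]
            norm_num
    calc (∫⁻ y, (S y) ^ 2) + ∫⁻ y, T y
        = ∑ j : Fin (s+1), ∫⁻ y, (S y + d j y) * d j y := hj2.symm
      _ = ∑ q : Fin (s+2), ∑ j : Fin (s+1), ∫⁻ y, d (j.predAbove q) y * d j y := by
          rw [hswap]; exact (Finset.sum_congr rfl fun j _ => (hj1 j)).symm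
      _ ≤ ((s:ℝ≥0∞) + 2) * ((s:ℝ≥0∞) * m) := hbound
  -- Step F : bound on the integral of S^2
  have hS2 : ∫⁻ y, (S y) ^ 2 ≤ ((s:ℝ≥0∞) + 1) * ((s:ℝ≥0∞) * m) := by
    have hpt : ∀ y, (S y) ^ 2 ≤ ((s:ℝ≥0∞) + 1) * T y := by
      intro y
      have h := sq_sum_le_card_mul_sum_sq (fun j : Fin (s+1) => d j y)
      rw [hSdef, hTdef]
      calc (∑ j : Fin (s+1), d j y) ^ 2
          ≤ ((s+1 : ℕ) : ℝ≥0∞) * ∑ j : Fin (s+1), (d j y) ^ 2 := h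
        _ = ((s:ℝ≥0∞) + 1) * ∑ j : Fin (s+1), (d j y) ^ 2 := by push_cast; ring_nf
    have hTS : ∫⁻ y, (S y) ^ 2 ≤ ((s:ℝ≥0∞) + 1) * ∫⁻ y, T y := by
      rw [← lintegral_const_mul _ hTmeas]
      exact lintegral_mono hpt
    have hchain : ((s:ℝ≥0∞) + 2) * ∫⁻ y, (S y) ^ 2
        ≤ ((s:ℝ≥0∞) + 2) * (((s:ℝ≥0∞) + 1) * ((s:ℝ≥0∞) * m)) := by
      have e1 : ((s:ℝ≥0∞) + 2) * ∫⁻ y, (S y) ^ 2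
          = ((s:ℝ≥0∞) + 1) * (∫⁻ y, (S y) ^ 2) + ∫⁻ y, (S y) ^ 2 := by ring
      rw [e1]
      calc ((s:ℝ≥0∞) + 1) * (∫⁻ y, (S y) ^ 2) + ∫⁻ y, (S y) ^ 2
          ≤ ((s:ℝ≥0∞) + 1) * (∫⁻ y, (S y) ^ 2) + ((s:ℝ≥0∞) + 1) * ∫⁻ y, T y :=
            add_le_add_right hTS _
        _ = ((s:ℝ≥0∞) + 1) * ((∫⁻ y, (S y) ^ 2) + ∫⁻ y, T y) := (mul_add _ _ _).symm
        _ ≤ ((s:ℝ≥0∞) + 1) * (((s:ℝ≥0∞) + 2) * ((s:ℝ≥0∞) * m)) := mul_le_mul_right hkey _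
        _ = ((s:ℝ≥0∞) + 2) * (((s:ℝ≥0∞) + 1) * ((s:ℝ≥0∞) * m)) := by ring
    have hs2ne : ((s:ℝ≥0∞) + 2) ≠ 0 := by
      simp
    have hs2top : ((s:ℝ≥0∞) + 2) ≠ ∞ :=
      ENNReal.add_ne_top.mpr ⟨ENNReal.natCast_ne_top s, ENNReal.ofNat_ne_top⟩
    exact (ENNReal.mul_le_mul_iff_right hs2ne hs2top).mp hchain
  -- Step G : Cauchy-Schwarz on the restricted measure
  have hSind : (unitCube s).indicator S = S := by
    funext y
    by_cases h : y ∈ unitCube s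
    · rw [Set.indicator_of_mem h]
    · rw [Set.indicator_of_notMem h]
      exact (Finset.sum_eq_zero fun j _ => hdzero j y h).symm
  have hS2ind : (unitCube s).indicator (fun y => (S y)^2) = fun y => (S y)^2 := by
    funext y
    by_cases h : y ∈ unitCube s
    · rw [Set.indicator_of_mem h]
    · rw [Set.indicator_of_notMem h]
      have : S y = 0 := Finset.sum_eq_zero fun j _ => hdzero j y h
      rw [this]
      simp
  have hρuniv : (volume.restrict (unitCube s)) Set.univ = 1 := by
    rw [Measure.restrict_apply_univ, volume_unitCube]
  have hJ : ∫⁻ y, S y ∂(volume.restrict (unitCube s)) = ((s:ℝ≥0∞) + 1) * m := by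
    rw [← lintegral_indicator (measurableSet_unitCube s), hSind,
      lintegral_finset_sum _ (fun j _ => hdmeas j)]
    simp only [hInt]
    rw [Finset.sum_const, Finset.card_univ, Fintype.card_fin, nsmul_eq_mul]
    push_cast
    ring
  have hIrestrict : ∫⁻ y, (S y)^2 ∂(volume.restrict (unitCube s)) = ∫⁻ y, (S y)^2 := by
    rw [← lintegral_indicator (measurableSet_unitCube s), hS2ind]
  have hCS := lintegral_sq_cauchy (volume.restrict (unitCube s)) hρuniv hSmeas
  rw [hJ, hIrestrict] at hCS
  have hfinal : (((s:ℝ≥0∞) + 1) * m) ^ 2 ≤ ((s:ℝ≥0∞) + 1) * ((s:ℝ≥0∞) * m) :=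
    le_trans hCS hS2
  -- final arithmetic
  have hgoal : (1:ℝ≥0∞) ≤ ((s:ℝ≥0∞) + 1) * volume C := by
    rcases eq_or_ne m 0 with hm0 | hm0
    · rw [hm0, add_zero] at hCm
      rw [hCm, mul_one]
      exact le_add_self
    · have hX0 : ((s:ℝ≥0∞) + 1) * m ≠ 0 := by
        apply mul_ne_zero _ hm0
        simp
      have hXtop : ((s:ℝ≥0∞) + 1) * m ≠ ∞ :=
        ENNReal.mul_ne_top (ENNReal.add_ne_top.mpr ⟨ENNReal.natCast_ne_top s,
          ENNReal.one_ne_top⟩) hmtop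
      have h1 : (((s:ℝ≥0∞) + 1) * m) * (((s:ℝ≥0∞) + 1) * m)
          ≤ (((s:ℝ≥0∞) + 1) * m) * (s:ℝ≥0∞) := by
        calc (((s:ℝ≥0∞) + 1) * m) * (((s:ℝ≥0∞) + 1) * m)
            = (((s:ℝ≥0∞) + 1) * m) ^ 2 := (sq _).symm
          _ ≤ ((s:ℝ≥0∞) + 1) * ((s:ℝ≥0∞) * m) := hfinal
          _ = (((s:ℝ≥0∞) + 1) * m) * (s:ℝ≥0∞) := by ring
      have h2 : ((s:ℝ≥0∞) + 1) * m ≤ (s:ℝ≥0∞) :=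
        (ENNReal.mul_le_mul_iff_right hX0 hXtop).mp h1
      have h3 : (1:ℝ≥0∞) + (s:ℝ≥0∞) ≤ ((s:ℝ≥0∞) + 1) * volume C + (s:ℝ≥0∞) := by
        calc (1:ℝ≥0∞) + (s:ℝ≥0∞) = ((s:ℝ≥0∞) + 1) * 1 := by ring
          _ = ((s:ℝ≥0∞) + 1) * (volume C + m) := by rw [hCm]
          _ = ((s:ℝ≥0∞) + 1) * volume C + ((s:ℝ≥0∞) + 1) * m := mul_add _ _ _
          _ ≤ ((s:ℝ≥0∞) + 1) * volume C + (s:ℝ≥0∞) := add_le_add_right h2 _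
      exact (ENNReal.add_le_add_iff_right (ENNReal.natCast_ne_top s)).mp h3
  have hcast : ((s + 1 : ℕ) : ℝ≥0∞) = (s:ℝ≥0∞) + 1 := by push_cast; ring
  have hne0 : ((s:ℝ≥0∞) + 1) ≠ 0 := fun h => one_ne_zero ((add_eq_zero.mp h).2)
  have hnetop : ((s:ℝ≥0∞) + 1) ≠ ∞ :=
    ENNReal.add_ne_top.mpr ⟨ENNReal.natCast_ne_top s, ENNReal.one_ne_top⟩
  rw [hcast, ENNReal.div_le_iff_le_mul (Or.inl hne0) (Or.inl hnetop)]
  calc (1:ℝ≥0∞) ≤ ((s:ℝ≥0∞) + 1) * volume C := hgoal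
    _ = volume C * ((s:ℝ≥0∞) + 1) := mul_comm _ _
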